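/- Let x̄ be a fractional flow and x• the integral flow produced by independently rounding each player to a random path via path-stripping (so that E[x•_{i,e}] = x̄_{i,e} for each player and edge). If with probability at least 1-β the rounded congestion exceeds the fractional congestion by at most W = √(2n ln(m/β)) on every edge, then the costs satisfy φ(x•) ≤ φ(x̄) + mW(γ+1), assuming each ℓ_e is γ-Lipschitz and ℓ_e(n) ≤ n. -/

import Mathlib

/-- Average latency `φ(x) = (1/n) Σ_e (Σ_i x_{i,e})·ℓ_e(Σ_i x_{i,e})`. -/
noncomputable def phiCost {n m : ℕ} (ℓ : Fin m → ℝ → ℝ)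
    (x : Fin n → Fin m → ℝ) : ℝ :=
  (1 / n : ℝ) * ∑ e, (∑ i, x i e) * ℓ e (∑ i, x i e)

/-- Rounding quality: if the integral flow `x•` produced by path-stripping randomized
rounding exceeds the fractional congestion of `x̄` by at most `W = √(2n ln(m/β))` on
every edge, then `φ(x•) ≤ φ(x̄) + mW(γ+1)`, for `γ`-Lipschitz nondecreasing latencies
with `ℓ_e(y) ≤ n` on `[0,n]`. -/
theorem rounding_cost_bound {n m : ℕ} (hn : 0 < n) (hm : 0 < m)
    (ℓ : Fin m → ℝ → ℝ) (γ W β : ℝ) (hγ : 0 ≤ γ) (hβ : 0 < β)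
    (hW : W = Real.sqrt (2 * n * Real.log (m / β)))
    (hlip : ∀ (e : Fin m) (a b : ℝ), |ℓ e a - ℓ e b| ≤ γ * |a - b|)
    (hmono : ∀ e, Monotone (ℓ e))
    (hnonneg : ∀ e y, 0 ≤ ℓ e y)
    (hbound : ∀ e y, y ∈ Set.Icc (0 : ℝ) (n : ℝ) → ℓ e y ≤ n)
    (xbar xdot : Fin n → Fin m → ℝ)
    (hxbar : ∀ i e, 0 ≤ xbar i e ∧ xbar i e ≤ 1)
    (hxdot : ∀ i e, xdot i e = 0 ∨ xdot i e = 1)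
    (hcong : ∀ e, (∑ i, xdot i e) ≤ (∑ i, xbar i e) + W) :
    phiCost ℓ xdot ≤ phiCost ℓ xbar + m * W * (γ + 1) := by

  have hW0 : 0 ≤ W := hW ▸ Real.sqrt_nonneg _
  have key : ∀ e : Fin m, (∑ i, xdot i e) * ℓ e (∑ i, xdot i e) ≤
      (∑ i, xbar i e) * ℓ e (∑ i, xbar i e) + n * W * (γ + 1) := by
    intro e
    set Sd := ∑ i, xdot i e with hSd
    set Sb := ∑ i, xbar i e with hSb
    have hSd0 : 0 ≤ Sd := Finset.sum_nonneg fun i _ => by rcases hxdot i e with h|h <;> simp [h]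
    have hSdn : Sd ≤ n := by
      calc Sd ≤ ∑ _i : Fin n, (1:ℝ) :=
            Finset.sum_le_sum fun i _ => by rcases hxdot i e with h|h <;> simp [h]
        _ = n := by simp
    have hSb0 : 0 ≤ Sb := Finset.sum_nonneg fun i _ => (hxbar i e).1
    have hSbn : Sb ≤ n := by
      calc Sb ≤ ∑ _i : Fin n, (1:ℝ) := Finset.sum_le_sum fun i _ => (hxbar i e).2
        _ = n := by simp
    have h1 : ℓ e Sd ≤ ℓ e (Sb + W) := hmono e (hcong e)
    have h2 : ℓ e (Sb + W) ≤ ℓ e Sb + γ * W := by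
      have := hlip e (Sb + W) Sb
      rw [show Sb + W - Sb = W by ring, abs_of_nonneg hW0] at this
      linarith [abs_le.mp (abs_le.mpr ⟨neg_abs_le _, le_abs_self _⟩ : |ℓ e (Sb+W) - ℓ e Sb| ≤ |ℓ e (Sb+W) - ℓ e Sb|)|>.2, le_abs_self (ℓ e (Sb+W) - ℓ e Sb)]
    have hlSb : ℓ e Sb ≤ n := hbound e Sb ⟨hSb0, hSbn⟩
    have hlSb0 : 0 ≤ ℓ e Sb := hnonneg e Sb
    calc Sd * ℓ e Sd ≤ Sd * (ℓ e Sb + γ * W) :=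
          mul_le_mul_of_nonneg_left (h1.trans h2) hSd0
      _ = Sd * ℓ e Sb + Sd * (γ * W) := by ring
      _ ≤ (Sb + W) * ℓ e Sb + n * (γ * W) := by
          have := mul_le_mul_of_nonneg_right (hcong e) hlSb0
          have h3 : Sd * (γ * W) ≤ n * (γ * W) :=
            mul_le_mul_of_nonneg_right hSdn (by positivity)
          linarith
      _ = Sb * ℓ e Sb + W * ℓ e Sb + n * (γ * W) := by ring
      _ ≤ Sb * ℓ e Sb + W * n + n * (γ * W) := by
          nlinarith [mul_le_mul_of_nonneg_left hlSb hW0]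
      _ = Sb * ℓ e Sb + n * W * (γ + 1) := by ring
  have hsum : (∑ e, (∑ i, xdot i e) * ℓ e (∑ i, xdot i e)) ≤
      (∑ e, (∑ i, xbar i e) * ℓ e (∑ i, xbar i e)) + m * (n * W * (γ + 1)) := by
    calc (∑ e, (∑ i, xdot i e) * ℓ e (∑ i, xdot i e))
        ≤ ∑ e, ((∑ i, xbar i e) * ℓ e (∑ i, xbar i e) + n * W * (γ + 1)) :=
          Finset.sum_le_sum fun e _ => key e
      _ = (∑ e, (∑ i, xbar i e) * ℓ e (∑ i, xbar i e)) + m * (n * W * (γ + 1)) := by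
          rw [Finset.sum_add_distrib]; simp [mul_comm]
  have hn' : (0:ℝ) < n := by exact_mod_cast hn
  unfold phiCost
  rw [show (m:ℝ) * W * (γ+1) = (1/n) * ((m:ℝ) * (n * W * (γ+1))) by field_simp]
  rw [← mul_add]
  exact mul_le_mul_of_nonneg_left hsum (by positivity)
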